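/- Let X be a Hausdorff topological space, E : X → Type a family such that each fibre E x is a normed additive commutative group, and suppose the total space T = Σ_{x∈X} E x carries a topology satisfying: (i) the projection p : T → X is continuous; (ii) the norm map T → ℝ, (x,e) ↦ ‖e‖, is upper semicontinuous; (iii) fibrewise subtraction is continuous, i.e. the map {(a,b) ∈ T × T : p(a) = p(b)} → T sending (a,b) to a − b (computed in the common fibre) is continuous for the subspace topology; and (iv) for each x ∈ X, every net (a_i) in T with ‖a_i‖ → 0 and p(a_i) → x converges in T to the zero element 0_x of the fibre E x. Then for every x ∈ X, the subspace topology that the fibre E x = p⁻¹(x) inherits from T coincides with the norm topology of E x. -/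

import Mathlib

open Filter Topology

/-- In an (upper-semicontinuous) Banach bundle over a Hausdorff space, the subspace
topology on each fibre coincides with its norm topology.  The bundle axioms are
made explicit as hypotheses on an arbitrary topology on the total space `Σ x, E x`:
(i) the projection is continuous; (ii) the norm is upper semicontinuous;
(iii) fibrewise subtraction is continuous; (iv) every net (equivalently, filter) on
the total space along which the norms tend to `0` and the base points tend to `x`
converges to the zero element of the fibre over `x`. -/
theorem fibre_topology_eq_norm_topology {X : Type*} [TopologicalSpace X] [T2Space X]
    (E : X → Type*) [∀ x, NormedAddCommGroup (E x)]
    [tT : TopologicalSpace (Σ x, E x)]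
    (hproj : Continuous (Sigma.fst : (Σ x, E x) → X))
    (hnorm : UpperSemicontinuous fun t : Σ x, E x => ‖t.2‖)
    (hsub : Continuous fun q : {p : (Σ x, E x) × (Σ x, E x) // p.1.1 = p.2.1} =>
      (⟨q.1.1.1, q.1.1.2 - cast (congrArg E q.2).symm q.1.2.2⟩ : Σ x, E x))
    (hzero : ∀ (x : X) (l : Filter (Σ x, E x)),
      Tendsto (fun t : Σ x, E x => ‖t.2‖) l (𝓝 0) →
      Tendsto (Sigma.fst : (Σ x, E x) → X) l (𝓝 x) →
      l ≤ 𝓝 (⟨x, 0⟩ : Σ x, E x)) :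
    ∀ x : X, TopologicalSpace.induced (fun e : E x => (⟨x, e⟩ : Σ x, E x)) tT =
      (inferInstance : TopologicalSpace (E x)) := by
  intro x
  set ι : E x → (Σ x, E x) := fun e => ⟨x, e⟩ with hι
  -- A helper: fibrewise subtraction through `hsub` for points in the same fibre `x`.
  have key : ∀ (l : Filter (E x)) (f g : E x → E x) (a b : E x),
      Tendsto (fun i => ι (f i)) l (𝓝 (ι a)) → Tendsto (fun i => ι (g i)) l (𝓝 (ι b)) →
      Tendsto (fun i => ι (f i - g i)) l (𝓝 (ι (a - b))) := by
    intro l f g a b hf hg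
    have hpair : Tendsto (fun i => (⟨(ι (f i), ι (g i)), rfl⟩ :
        {p : (Σ x, E x) × (Σ x, E x) // p.1.1 = p.2.1})) l
        (𝓝 (⟨(ι a, ι b), rfl⟩ : {p : (Σ x, E x) × (Σ x, E x) // p.1.1 = p.2.1})) := by
      rw [tendsto_subtype_rng]
      exact hf.prodMk_nhds hg
    exact (hsub.tendsto _).comp hpair
  apply le_antisymm
  · -- induced ≤ norm : compare neighbourhood filters
    rw [le_iff_nhds]
    intro e
    rw [nhds_induced]
    set l : Filter (E x) := comap ι (𝓝 (ι e)) with hl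
    have hle : Tendsto ι l (𝓝 (ι e)) := tendsto_comap
    have hd : Tendsto (fun e' => ι (e' - e)) l (𝓝 (ι (e - e))) :=
      key l (fun e' => e') (fun _ => e) e e hle tendsto_const_nhds
    rw [sub_self] at hd
    have hnz : Tendsto (fun e' : E x => ‖e' - e‖) l (𝓝 0) := by
      rw [tendsto_order]
      constructor
      · intro b hb
        exact Eventually.of_forall fun e' => lt_of_lt_of_le hb (norm_nonneg _)
      · intro b hb
        have h1 := (hnorm (ι (0 : E x))) b (by show ‖(0 : E x)‖ < b; simpa using hb)
        have h2 := hd.eventually h1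
        simpa using h2
    have : Tendsto (fun e' : E x => e') l (𝓝 e) := by
      rw [tendsto_iff_norm_sub_tendsto_zero]
      exact hnz
    exact this
  · -- norm ≤ induced : ι is continuous from the norm topology
    have hcont : Continuous ι := by
      rw [continuous_iff_continuousAt]
      intro e
      -- first, `fun e' => ι (e - e')` tends to the zero of the fibre
      have h0 : Tendsto (fun e' : E x => ι (e - e')) (𝓝 e) (𝓝 (ι 0)) := by
        apply hzero x
        · have : Tendsto (fun e' : E x => ‖e - e'‖) (𝓝 e) (𝓝 ‖e - e‖) :=
            ((continuous_const.sub continuous_id).norm).tendsto e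
          rw [sub_self, norm_zero] at this
          exact (tendsto_map'_iff).mpr this
        · exact (tendsto_map'_iff).mpr tendsto_const_nhds
      have := key (𝓝 e) (fun _ => e) (fun e' => e - e') e 0 tendsto_const_nhds h0
      exact (by simpa [sub_sub_cancel] using this : Tendsto (fun i => ι i) (𝓝 e) (𝓝 (ι e)))
    exact continuous_iff_le_induced.mp hcont
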